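/- Let R be a 2×2 integer matrix with trace 0 and determinant -1, say R = [[a,b],[c,-a]], and let P = [[0,1],[1,0]]. If P·R·P = R·P·R and R ≠ P, then R is one of the four matrices [[e,0],[-1,-e]] or [[e,-1],[0,-e]] with e = ±1. -/
import Mathlib

/-- If `R = [[a,b],[c,-a]]` has determinant `-1`, `P = [[0,1],[1,0]]`, `PRP = RPR` and `R ≠ P`,
then `R` is one of the four matrices `[[e,0],[-1,-e]]`, `[[e,-1],[0,-e]]` with `e = ±1`. -/
theorem stmt_2 (a b c : ℤ) (R P : Matrix (Fin 2) (Fin 2) ℤ)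
    (hR : R = !![a, b; c, -a]) (hdet : R.det = -1)
    (hP : P = !![0, 1; 1, 0])
    (heq : P * R * P = R * P * R) (hne : R ≠ P) :
    ∃ e : ℤ, (e = 1 ∨ e = -1) ∧ (R = !![e, 0; -1, -e] ∨ R = !![e, -1; 0, -e]) := by
  subst hR hP
  simp [Matrix.det_fin_two_of] at hdet
  have e1 : (!![(0:ℤ), 1; 1, 0] * !![a, b; c, -a] * !![0, 1; 1, 0]) = !![-a, c; b, a] := by
    simp [Matrix.mul_fin_two]
  have e2 : (!![a, b; c, -a] * !![(0:ℤ), 1; 1, 0] * !![a, b; c, -a]) =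
      !![b*a + a*c, b*b - a*a; c*c - a*a, -(a*b) - c*a] := by
    ext i j
    fin_cases i <;> fin_cases j <;> simp [Matrix.mul_fin_two] <;> ring
  rw [e1, e2, ← Matrix.ext_iff] at heq
  simp [Fin.forall_fin_two] at heq
  obtain ⟨⟨h1, h2⟩, h3, h4⟩ := heq
  rw [ne_eq, ← Matrix.ext_iff] at hne
  simp [Fin.forall_fin_two] at hne
  by_cases ha : a = 0
  · subst ha
    have hbc : b * c = 1 := by linarith
    rcases Int.mul_eq_one_iff_eq_one_or_neg_one.mp hbc with ⟨hb, hc⟩ | ⟨hb, hc⟩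
    · subst hb; subst hc; simp at hne
    · subst hb; subst hc; simp at h2
  · have hbc : b + c = -1 := by
      have h : a * (b + c + 1) = 0 := by linarith [h1]
      rcases mul_eq_zero.mp h with h | h
      · exact absurd h ha
      · linarith
    have hsq : a ^ 2 = b ^ 2 + b + 1 := by nlinarith
    have key : (2*a - 2*b - 1) * (2*a + 2*b + 1) = 3 := by linear_combination 4*hsq
    have hdvd : (2*a - 2*b - 1) ∣ 3 := ⟨_, key.symm⟩
    have hb1 : 2*a - 2*b - 1 ≤ 3 := Int.le_of_dvd (by norm_num) hdvd
    have hb2 : -(2*a - 2*b - 1) ≤ 3 := Int.le_of_dvd (by norm_num) ((neg_dvd).mpr hdvd)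
    obtain ⟨u, hu⟩ : ∃ u, u = 2*a - 2*b - 1 := ⟨_, rfl⟩
    rw [← hu] at key hb1 hb2
    have hab : (a = 1 ∧ b = 0) ∨ (a = 1 ∧ b = -1) ∨ (a = -1 ∧ b = -1) ∨ (a = -1 ∧ b = 0) := by
      have hb2' : -3 ≤ u := by linarith
      interval_cases u <;> omega
    rcases hab with ⟨h5, h6⟩ | ⟨h5, h6⟩ | ⟨h5, h6⟩ | ⟨h5, h6⟩ <;> subst h5 <;> subst h6
    all_goals first
      | (refine ⟨1, Or.inl rfl, ?_⟩; have hc : c = -1 := by omega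
         subst hc; exact Or.inl rfl)
      | (refine ⟨1, Or.inl rfl, ?_⟩; have hc : c = 0 := by omega
         subst hc; exact Or.inr rfl)
      | (refine ⟨-1, Or.inr rfl, ?_⟩; have hc : c = 0 := by omega
         subst hc; exact Or.inr rfl)
      | (refine ⟨-1, Or.inr rfl, ?_⟩; have hc : c = -1 := by omega
         subst hc; exact Or.inl rfl)
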